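/- Let m ≥ 1, d ≥ 0, t ≥ 1 be given with t a real number, let h ∈ (0, 1], and let ε be a real number with 0 < ε ≤ h^{t(d+1)}. Let θ_1, …, θ_m be nonnegative reals with Σ_{k=1}^m θ_k = 1 and let I_1, …, I_m be nonnegative reals (the smoothness indicators). Let K_1 ⊆ {1, …, m} and suppose there are constants θ_min > 0, c_1 ≥ 0, μ > 0, A ≥ 0, M ≥ 0 and an index k_0 ∈ K_1 such that: θ_{k_0} ≥ θ_min; I_k ≤ c_1 · h^{d+1} for all k ∈ K_1; I_k ≥ μ for all k ∉ K_1; and real numbers p_1, …, p_m and y satisfy |p_k − y| ≤ A · h^{d+1} for k ∈ K_1 and |p_k − y| ≤ M for k ∉ K_1. Define α_k = θ_k / (I_k^t + ε) and β_k = α_k / Σ_{j=1}^m α_j. Then |Σ_{k=1}^m β_k p_k − y| ≤ (A + m·M·(c_1^t + 1)/(θ_min · μ^t)) · h^{d+1}. -/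

import Mathlib

/-- quantitative accuracy of the non-linear partition-of-unity
MLS operator with WENO-type weights `β_k = α_k / ∑ α_j`,
`α_k = θ_k / (I_k^t + ε)`. -/
theorem nonlinear_pu_mls_accuracy
    (m d : ℕ) (hm : 1 ≤ m) (t : ℝ) (ht : 1 ≤ t)
    (h : ℝ) (hh : 0 < h) (hh1 : h ≤ 1)
    (ε : ℝ) (hε : 0 < ε) (hε' : ε ≤ h ^ (t * (d + 1) : ℝ))
    (θ : Fin m → ℝ) (hθ0 : ∀ k, 0 ≤ θ k) (hθ1 : ∑ k, θ k = 1)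
    (I : Fin m → ℝ) (hI0 : ∀ k, 0 ≤ I k)
    (K1 : Finset (Fin m))
    (θmin c1 μ A M : ℝ)
    (hθmin : 0 < θmin) (hc1 : 0 ≤ c1) (hμ : 0 < μ) (hA : 0 ≤ A) (hM : 0 ≤ M)
    (k0 : Fin m) (hk0 : k0 ∈ K1) (hθk0 : θmin ≤ θ k0)
    (hIsmooth : ∀ k ∈ K1, I k ≤ c1 * h ^ (d + 1))
    (hIrough : ∀ k ∉ K1, μ ≤ I k)
    (p : Fin m → ℝ) (y : ℝ)
    (hpsmooth : ∀ k ∈ K1, |p k - y| ≤ A * h ^ (d + 1))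
    (hprough : ∀ k ∉ K1, |p k - y| ≤ M) :
    |(∑ k, ((θ k / (I k ^ t + ε)) / ∑ j, θ j / (I j ^ t + ε)) * p k) - y| ≤
      (A + m * M * (c1 ^ t + 1) / (θmin * μ ^ t)) * h ^ (d + 1) := by
  set H := h ^ (d + 1) with hH
  have hHpos : 0 < H := pow_pos hh _
  have hden : ∀ k, 0 < I k ^ t + ε := fun k =>
    add_pos_of_nonneg_of_pos (Real.rpow_nonneg (hI0 k) t) hε
  set α : Fin m → ℝ := fun k => θ k / (I k ^ t + ε) with hα
  have hα0 : ∀ k, 0 ≤ α k := fun k => div_nonneg (hθ0 k) (hden k).le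
  set S := ∑ j, α j with hS
  have hSk0 : α k0 ≤ S := Finset.single_le_sum (fun k _ => hα0 k) (Finset.mem_univ k0)
  have hαk0pos : 0 < α k0 := div_pos (lt_of_lt_of_le hθmin hθk0) (hden k0)
  have hSpos : 0 < S := lt_of_lt_of_le hαk0pos hSk0
  have hθle1 : ∀ k, θ k ≤ 1 := by
    intro k
    rw [← hθ1]
    exact Finset.single_le_sum (fun j _ => hθ0 j) (Finset.mem_univ k)
  have hμt : 0 < μ ^ t := Real.rpow_pos_of_pos hμ t
  have ht0 : (0:ℝ) ≤ t := le_trans zero_le_one ht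
  -- bound for rough α
  have hαrough : ∀ k ∉ K1, α k ≤ 1 / μ ^ t := by
    intro k hk
    have h1 : μ ^ t ≤ I k ^ t + ε := by
      have h2 : μ ^ t ≤ I k ^ t := Real.rpow_le_rpow hμ.le (hIrough k hk) ht0
      linarith [hε.le]
    rw [hα]
    exact div_le_div₀ zero_le_one (hθle1 k) hμt h1
  -- h^{t(d+1)} ≤ H
  have hHt : h ^ (t * (d + 1) : ℝ) ≤ H := by
    rw [hH, ← Real.rpow_natCast h (d + 1)]
    apply Real.rpow_le_rpow_of_exponent_ge hh hh1
    have : (1:ℝ) ≤ (d:ℝ) + 1 := by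
      have := Nat.cast_nonneg (α := ℝ) d
      linarith
    push_cast
    nlinarith
  have hc1t : 0 ≤ c1 ^ t := Real.rpow_nonneg hc1 t
  have hIk0t : I k0 ^ t + ε ≤ (c1 ^ t + 1) * H := by
    have h2 : I k0 ^ t ≤ c1 ^ t * h ^ (t * (d + 1) : ℝ) := by
      calc I k0 ^ t ≤ (c1 * h ^ (d + 1)) ^ t :=
            Real.rpow_le_rpow (hI0 k0) (hIsmooth k0 hk0) ht0
        _ = c1 ^ t * (h ^ (d + 1)) ^ t := Real.mul_rpow hc1 (pow_nonneg hh.le _)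
        _ = c1 ^ t * h ^ (t * (d + 1) : ℝ) := by
            rw [← Real.rpow_natCast h (d + 1), ← Real.rpow_mul hh.le]
            congr 1
            push_cast
            ring
    have h3 : (0:ℝ) ≤ h ^ (t * (d + 1) : ℝ) := Real.rpow_nonneg hh.le _
    nlinarith
  -- bound for rough β
  set B := (c1 ^ t + 1) * H / (θmin * μ ^ t) with hB
  have hβrough : ∀ k ∉ K1, α k / S ≤ B := by
    intro k hk
    have h1 : α k / S ≤ α k / α k0 :=
      div_le_div_of_nonneg_left (hα0 k) hαk0pos hSk0
    have h2 : θmin / ((c1 ^ t + 1) * H) ≤ α k0 := by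
      rw [hα]
      exact div_le_div₀ (hθ0 k0) hθk0 (hden k0) hIk0t
    have h3 : α k / α k0 ≤ (1 / μ ^ t) / (θmin / ((c1 ^ t + 1) * H)) := by
      apply div_le_div₀ (by positivity) (hαrough k hk) (by positivity) h2
    have h4 : (1 / μ ^ t) / (θmin / ((c1 ^ t + 1) * H)) = B := by
      rw [hB]; field_simp
    linarith
  have hβsum : ∑ k, α k / S = 1 := by
    rw [← Finset.sum_div, ← hS, div_self hSpos.ne']
  have hsplit : (∑ k, (α k / S) * p k) - y = ∑ k, (α k / S) * (p k - y) := by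
    simp only [mul_sub]
    rw [Finset.sum_sub_distrib, ← Finset.sum_mul, hβsum, one_mul]
  have habs : |(∑ k, (α k / S) * p k) - y| ≤ ∑ k, (α k / S) * |p k - y| := by
    rw [hsplit]
    refine le_trans (Finset.abs_sum_le_sum_abs _ _) (Finset.sum_le_sum fun k _ => ?_)
    rw [abs_mul, abs_of_nonneg (div_nonneg (hα0 k) hSpos.le)]
  have hsum1 : ∑ k ∈ K1, (α k / S) * |p k - y| ≤ A * H := by
    calc ∑ k ∈ K1, (α k / S) * |p k - y|
        ≤ ∑ k ∈ K1, (α k / S) * (A * H) := by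
          refine Finset.sum_le_sum fun k hk => ?_
          exact mul_le_mul_of_nonneg_left (hpsmooth k hk) (div_nonneg (hα0 k) hSpos.le)
      _ = (∑ k ∈ K1, α k / S) * (A * H) := by rw [Finset.sum_mul]
      _ ≤ 1 * (A * H) := by
          refine mul_le_mul_of_nonneg_right ?_ (by positivity)
          rw [← hβsum]
          exact Finset.sum_le_sum_of_subset_of_nonneg (Finset.subset_univ K1)
            (fun k _ _ => div_nonneg (hα0 k) hSpos.le)
      _ = A * H := one_mul _
  have hsum2 : ∑ k ∈ K1ᶜ, (α k / S) * |p k - y| ≤ m * (B * M) := by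
    calc ∑ k ∈ K1ᶜ, (α k / S) * |p k - y|
        ≤ ∑ k ∈ K1ᶜ, B * M := by
          refine Finset.sum_le_sum fun k hk => ?_
          have hk' : k ∉ K1 := Finset.mem_compl.mp hk
          exact mul_le_mul (hβrough k hk') (hprough k hk') (abs_nonneg _)
            (by positivity)
      _ = (K1ᶜ.card : ℝ) * (B * M) := by rw [Finset.sum_const, nsmul_eq_mul]
      _ ≤ m * (B * M) := by
          refine mul_le_mul_of_nonneg_right ?_ (by positivity)
          exact_mod_cast Nat.cast_le.mpr (le_trans (Finset.card_le_univ _) (by simp))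
  have hfinal : ∑ k, (α k / S) * |p k - y| ≤ A * H + m * (B * M) := by
    rw [← Finset.sum_add_sum_compl K1 (fun k => (α k / S) * |p k - y|)]
    exact add_le_add hsum1 hsum2
  have hrhs : A * H + m * (B * M) = (A + m * M * (c1 ^ t + 1) / (θmin * μ ^ t)) * H := by
    rw [hB]; field_simp
  calc |(∑ k, (α k / S) * p k) - y| ≤ ∑ k, (α k / S) * |p k - y| := habs
    _ ≤ A * H + m * (B * M) := hfinal
    _ = _ := hrhs
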